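/- Let γ be an element of Homeo_+(I) viewed as a homeomorphism of X = (0,1). If the fixed-point set Fix(γ) ∩ (0,1) is finite and nonempty, then γ is hyperbolic-like relative to the compact set K = [min(Fix(γ) ∩ (0,1)), max(Fix(γ) ∩ (0,1))]. -/
import Mathlib


/-- The group of self-homeomorphisms of a topological space,
with `(f * g) x = f (g x)`. -/
instance homeoGroup (X : Type*) [TopologicalSpace X] : Group (X ≃ₜ X) where
  mul f g := g.trans f
  one := Homeomorph.refl X
  inv := Homeomorph.symm
  mul_assoc f g h := rfl
  one_mul f := Homeomorph.ext fun _ => rfl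
  mul_one f := Homeomorph.ext fun _ => rfl
  inv_mul_cancel f := Homeomorph.ext fun x => f.symm_apply_apply x

/-- `γ` is hyperbolic-like relative to `K`: there is a finite set `{x 0, …, x (n-1)}`
such that for all open neighborhoods `U i` of the `x i`, all sufficiently high
positive and negative powers of `γ` map `K \ ⋃ U i` into `⋃ U i`. -/
def IsHyperbolicLike {X : Type*} [TopologicalSpace X] (γ : X ≃ₜ X) (K : Set X) : Prop :=
  ∃ (n : ℕ) (x : Fin n → X),
    ∀ U : Fin n → Set X, (∀ i, IsOpen (U i) ∧ x i ∈ U i) →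
      ∃ M : ℕ, ∀ m : ℕ, M < m →
        (γ ^ m) '' (K \ ⋃ i, U i) ⊆ (⋃ i, U i) ∧
        (γ ^ m).symm '' (K \ ⋃ i, U i) ⊆ (⋃ i, U i)

abbrev XI := ↥(Set.Ioo (0:ℝ) 1)

open Set Filter Topology

lemma image_Icc_X (a b : XI) : Subtype.val '' (Set.Icc a b) = Set.Icc (a:ℝ) (b:ℝ) := by
  ext r
  constructor
  · rintro ⟨t, ht, rfl⟩
    exact ⟨Subtype.coe_le_coe.2 ht.1, Subtype.coe_le_coe.2 ht.2⟩
  · intro hr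
    have hrm : r ∈ Set.Ioo (0:ℝ) 1 := ⟨lt_of_lt_of_le a.2.1 hr.1, lt_of_le_of_lt hr.2 b.2.2⟩
    exact ⟨⟨r, hrm⟩, ⟨Subtype.coe_le_coe.1 hr.1, Subtype.coe_le_coe.1 hr.2⟩, rfl⟩

lemma isPreconnected_Icc_X (a b : XI) : IsPreconnected (Set.Icc a b) := by
  have : IsPreconnected (Subtype.val '' (Set.Icc a b)) := by
    rw [image_Icc_X]; exact isPreconnected_Icc
  exact (Topology.IsInducing.subtypeVal.isPreconnected_image).1 this

lemma isCompact_Icc_X (a b : XI) : IsCompact (Set.Icc a b) := by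
  apply (Topology.IsEmbedding.subtypeVal.isCompact_iff).2
  rw [image_Icc_X]; exact isCompact_Icc

lemma signPosX (δ : XI ≃ₜ XI) (P L y : XI)
    (hnofix : ∀ t, P < t → t < L → δ t ≠ t)
    (hPy : P < y) (hyL : y < L) (hpos : y < δ y) :
    ∀ t, P < t → t < L → t < δ t := by
  intro t hPt htL
  rcases lt_trichotomy t (δ t) with h|h|h
  · exact h
  · exact absurd h.symm (hnofix t hPt htL)
  · exfalso
    have hgc : Continuous (fun s : XI => (δ s : ℝ) - (s : ℝ)) :=
      (continuous_subtype_val.comp δ.continuous).sub continuous_subtype_val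
    have hpre := isPreconnected_Icc_X (min t y) (max t y)
    have hsub := hpre.intermediate_value (a := t) (b := y)
      ⟨min_le_left t y, le_max_left t y⟩ ⟨min_le_right t y, le_max_right t y⟩
      hgc.continuousOn
    have h0 : (0:ℝ) ∈ Set.Icc ((δ t : ℝ) - t) ((δ y : ℝ) - y) :=
      ⟨sub_nonpos.2 (Subtype.coe_le_coe.2 h.le), sub_nonneg.2 (Subtype.coe_le_coe.2 hpos.le)⟩
    obtain ⟨w, hw, hgw⟩ := hsub h0
    have hfw : δ w = w := Subtype.ext (by have hz : (δ w : ℝ) - (w:ℝ) = 0 := hgw; have := sub_eq_zero.1 hz; exact_mod_cast this)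
    refine hnofix w ?_ ?_ hfw
    · exact lt_of_lt_of_le (lt_min hPt hPy) hw.1
    · exact lt_of_le_of_lt hw.2 (max_lt htL hyL)

lemma orbit_incr (δ : XI ≃ₜ XI) (hsm : StrictMono ⇑δ) (w L : XI) (hL : δ L = L)
    (hwL : w < L) (hinc : ∀ t, w ≤ t → t < L → t < δ t) :
    Filter.Tendsto (fun m => (δ^m) w) Filter.atTop (𝓝 L) := by
  have hp1 : ∀ (m:ℕ) (t:XI), (δ^(m+1)) t = δ ((δ^m) t) := by
    intro m t; rw [pow_succ']; rfl
  have hmem : ∀ m : ℕ, w ≤ (δ^m) w ∧ (δ^m) w < L := by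
    intro m; induction m with
    | zero => exact ⟨le_refl _, hwL⟩
    | succ n ih =>
      have h1 := hinc _ ih.1 ih.2
      refine ⟨?_, ?_⟩ <;> rw [hp1]
      · exact ih.1.trans h1.le
      · calc δ ((δ^n) w) < δ L := hsm ih.2
          _ = L := hL
  have hmono : Monotone fun m => ((δ^m) w : ℝ) := by
    apply monotone_nat_of_le_succ
    intro n
    have h1 := (hinc _ (hmem n).1 (hmem n).2).le
    rw [hp1]
    exact Subtype.coe_le_coe.2 h1
  have hbdd : BddAbove (Set.range fun m => ((δ^m) w : ℝ)) := by
    refine ⟨(L:ℝ), ?_⟩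
    rintro _ ⟨m, rfl⟩
    exact Subtype.coe_le_coe.2 (hmem m).2.le
  set ℓ : ℝ := ⨆ m, ((δ^m) w : ℝ) with hℓ
  have htd : Tendsto (fun m => ((δ^m) w : ℝ)) atTop (𝓝 ℓ) := tendsto_atTop_ciSup hmono hbdd
  have hl1 : (w:ℝ) ≤ ℓ := by
    have := le_ciSup hbdd 0
    simpa using this
  have hl2 : ℓ ≤ (L:ℝ) := ciSup_le fun m => Subtype.coe_le_coe.2 (hmem m).2.le
  have hℓmem : ℓ ∈ Set.Ioo (0:ℝ) 1 := ⟨lt_of_lt_of_le w.2.1 hl1, lt_of_le_of_lt hl2 L.2.2⟩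
  have htdX : Tendsto (fun m => (δ^m) w) atTop (𝓝 (⟨ℓ, hℓmem⟩ : XI)) := tendsto_subtype_rng.2 htd
  have hfix : δ ⟨ℓ, hℓmem⟩ = ⟨ℓ, hℓmem⟩ := by
    have h1 : Tendsto (fun m : ℕ => (δ^(m+1)) w) atTop (𝓝 (⟨ℓ, hℓmem⟩ : XI)) := by
      have := htdX.comp (tendsto_add_atTop_nat 1)
      exact this
    have h2 : Tendsto (fun m : ℕ => δ ((δ^m) w)) atTop (𝓝 (δ ⟨ℓ, hℓmem⟩)) :=
      (δ.continuous.tendsto _).comp htdX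
    have he : (fun m : ℕ => (δ^(m+1)) w) = fun m => δ ((δ^m) w) := funext fun m => hp1 m w
    rw [he] at h1
    exact tendsto_nhds_unique h2 h1
  have heq : (⟨ℓ, hℓmem⟩ : XI) = L := by
    have hle : (⟨ℓ, hℓmem⟩ : XI) ≤ L := Subtype.coe_le_coe.1 hl2
    rcases hle.lt_or_eq with h|h
    · have hwl : w ≤ (⟨ℓ, hℓmem⟩ : XI) := Subtype.coe_le_coe.1 hl1
      exact absurd hfix (hinc _ hwl h).ne'
    · exact h
  rwa [heq] at htdX

lemma orbit_decr (δ : XI ≃ₜ XI) (hsm : StrictMono ⇑δ) (P w : XI) (hP : δ P = P)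
    (hPw : P < w) (hdec : ∀ t, P < t → t ≤ w → δ t < t) :
    Filter.Tendsto (fun m => (δ^m) w) Filter.atTop (𝓝 P) := by
  have hp1 : ∀ (m:ℕ) (t:XI), (δ^(m+1)) t = δ ((δ^m) t) := by
    intro m t; rw [pow_succ']; rfl
  have hmem : ∀ m : ℕ, (δ^m) w ≤ w ∧ P < (δ^m) w := by
    intro m; induction m with
    | zero => exact ⟨le_refl _, hPw⟩
    | succ n ih =>
      have h1 := hdec _ ih.2 ih.1
      refine ⟨?_, ?_⟩ <;> rw [hp1]
      · exact h1.le.trans ih.1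
      · calc P = δ P := hP.symm
          _ < δ ((δ^n) w) := hsm ih.2
  have hmono : Antitone fun m => ((δ^m) w : ℝ) := by
    apply antitone_nat_of_succ_le
    intro n
    have h1 := (hdec _ (hmem n).2 (hmem n).1).le
    rw [hp1]
    exact Subtype.coe_le_coe.2 h1
  have hbdd : BddBelow (Set.range fun m => ((δ^m) w : ℝ)) := by
    refine ⟨(P:ℝ), ?_⟩
    rintro _ ⟨m, rfl⟩
    exact Subtype.coe_le_coe.2 (hmem m).2.le
  set ℓ : ℝ := ⨅ m, ((δ^m) w : ℝ) with hℓ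
  have htd : Tendsto (fun m => ((δ^m) w : ℝ)) atTop (𝓝 ℓ) := tendsto_atTop_ciInf hmono hbdd
  have hl1 : ℓ ≤ (w:ℝ) := by
    have := ciInf_le hbdd 0
    simpa using this
  have hl2 : (P:ℝ) ≤ ℓ := le_ciInf fun m => Subtype.coe_le_coe.2 (hmem m).2.le
  have hℓmem : ℓ ∈ Set.Ioo (0:ℝ) 1 := ⟨lt_of_lt_of_le P.2.1 hl2, lt_of_le_of_lt hl1 w.2.2⟩
  have htdX : Tendsto (fun m => (δ^m) w) atTop (𝓝 (⟨ℓ, hℓmem⟩ : XI)) := tendsto_subtype_rng.2 htd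
  have hfix : δ ⟨ℓ, hℓmem⟩ = ⟨ℓ, hℓmem⟩ := by
    have h1 : Tendsto (fun m : ℕ => (δ^(m+1)) w) atTop (𝓝 (⟨ℓ, hℓmem⟩ : XI)) := by
      have := htdX.comp (tendsto_add_atTop_nat 1)
      exact this
    have h2 : Tendsto (fun m : ℕ => δ ((δ^m) w)) atTop (𝓝 (δ ⟨ℓ, hℓmem⟩)) :=
      (δ.continuous.tendsto _).comp htdX
    have he : (fun m : ℕ => (δ^(m+1)) w) = fun m => δ ((δ^m) w) := funext fun m => hp1 m w
    rw [he] at h1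
    exact tendsto_nhds_unique h2 h1
  have heq : (⟨ℓ, hℓmem⟩ : XI) = P := by
    have hle : P ≤ (⟨ℓ, hℓmem⟩ : XI) := Subtype.coe_le_coe.1 hl2
    rcases hle.lt_or_eq with h|h
    · have hwl : (⟨ℓ, hℓmem⟩ : XI) ≤ w := Subtype.coe_le_coe.1 hl1
      exact absurd hfix (hdec _ h hwl).ne
    · exact h.symm
  rwa [heq] at htdX

lemma keyX (δ : XI ≃ₜ XI) (hsm : StrictMono ⇑δ)
    (Φ : Set XI) (hΦ : ∀ t, δ t = t ↔ t ∈ Φ) (hfin : Φ.Finite)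
    (a b : XI) (ha : a ∈ Φ) (hb : b ∈ Φ) (_hab : ∀ t ∈ Φ, a ≤ t ∧ t ≤ b)
    (V : Set XI) (hV : IsOpen V) (hΦV : Φ ⊆ V) :
    ∃ M : ℕ, ∀ m, M ≤ m → ∀ y ∈ Set.Icc a b \ V, (δ ^ m) y ∈ V := by
  have hp1 : ∀ (m:ℕ) (t:XI), (δ^(m+1)) t = δ ((δ^m) t) := by
    intro m t; rw [pow_succ']; rfl
  have hpowSM : ∀ m : ℕ, StrictMono ⇑(δ^m) := by
    intro m; induction m with
    | zero => intro s t h; exact h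
    | succ n ih => intro s t h; rw [hp1, hp1]; exact hsm (ih h)
  have hpowfix : ∀ (L:XI), δ L = L → ∀ m, (δ^m) L = L := by
    intro L hL m; induction m with
    | zero => rfl
    | succ n ih => rw [hp1, ih, hL]
  have hC : IsCompact (Set.Icc a b \ V) := (isCompact_Icc_X a b).diff hV
  have claim : ∀ y ∈ Set.Icc a b \ V, ∃ (W : Set XI) (My : ℕ), W ∈ 𝓝 y ∧
      ∀ m, My ≤ m → ∀ z ∈ W, (δ^m) z ∈ V := by
    intro y hy
    have hyΦ : y ∉ Φ := fun h => hy.2 (hΦV h)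
    have hyfix : δ y ≠ y := fun h => hyΦ ((hΦ y).1 h)
    have hSne : ∃ f, f ∈ {f | f ∈ Φ ∧ y < f} :=
      ⟨b, hb, lt_of_le_of_ne hy.1.2 (fun h => hyΦ (h ▸ hb))⟩
    have hTne : ∃ f, f ∈ {f | f ∈ Φ ∧ f < y} :=
      ⟨a, ha, lt_of_le_of_ne hy.1.1.ge (fun h => hyΦ (h ▸ ha))⟩
    obtain ⟨L, ⟨hLΦ, hyL⟩, hLmin⟩ :=
      Set.exists_min_image {f | f ∈ Φ ∧ y < f} id (hfin.subset (fun t ht => ht.1)) hSne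
    obtain ⟨P, ⟨hPΦ, hPy⟩, hPmax⟩ :=
      Set.exists_max_image {f | f ∈ Φ ∧ f < y} id (hfin.subset (fun t ht => ht.1)) hTne
    have hnofix : ∀ t, P < t → t < L → δ t ≠ t := by
      intro t hPt htL hft
      have htΦ := (hΦ t).1 hft
      rcases lt_trichotomy t y with h|h|h
      · exact absurd (hPmax t ⟨htΦ, h⟩) (not_le.2 hPt)
      · exact hyΦ (h ▸ htΦ)
      · exact absurd (hLmin t ⟨htΦ, h⟩) (not_le.2 htL)
    rcases lt_or_gt_of_ne hyfix with hneg | hpos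
    · -- decreasing case : δ y < y, attracted to P
      have hall : ∀ t, P < t → t < L → δ t < t := by
        intro t hPt htL
        rcases lt_trichotomy (δ t) t with h|h|h
        · exact h
        · exact absurd h (hnofix t hPt htL)
        · exact absurd ((signPosX δ P L t hnofix hPt htL h) y hPy hyL) (not_lt.2 hneg.le)
      obtain ⟨w, hyw, hwL⟩ := exists_between hyL
      have hPw : P < w := hPy.trans hyw
      have htend := orbit_decr δ hsm P w ((hΦ P).2 hPΦ) hPw
        (fun t hPt htw => hall t hPt (lt_of_le_of_lt htw hwL))
      obtain ⟨l, u, hPlu, hluV⟩ := mem_nhds_iff_exists_Ioo_subset.1 (hV.mem_nhds (hΦV hPΦ))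
      have hev : ∀ᶠ m in atTop, (δ^m) w < u := htend.eventually (eventually_lt_nhds hPlu.2)
      obtain ⟨M1, hM1⟩ := eventually_atTop.1 hev
      refine ⟨Set.Ioo P w, M1, isOpen_Ioo.mem_nhds ⟨hPy, hyw⟩, ?_⟩
      intro m hm z hz
      apply hluV
      refine ⟨?_, lt_of_le_of_lt ((hpowSM m).monotone hz.2.le) (hM1 m hm)⟩
      have h2 : (δ^m) P < (δ^m) z := hpowSM m hz.1
      rw [hpowfix P ((hΦ P).2 hPΦ) m] at h2
      exact hPlu.1.trans h2
    · -- increasing case : y < δ y, attracted to L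
      have hall : ∀ t, P < t → t < L → t < δ t := signPosX δ P L y hnofix hPy hyL hpos
      obtain ⟨w, hPw, hwy⟩ := exists_between hPy
      have hwL : w < L := hwy.trans hyL
      have htend := orbit_incr δ hsm w L ((hΦ L).2 hLΦ) hwL
        (fun t hwt htL => hall t (hPw.trans_le hwt) htL)
      obtain ⟨l, u, hLlu, hluV⟩ := mem_nhds_iff_exists_Ioo_subset.1 (hV.mem_nhds (hΦV hLΦ))
      have hev : ∀ᶠ m in atTop, l < (δ^m) w := htend.eventually (eventually_gt_nhds hLlu.1)
      obtain ⟨M1, hM1⟩ := eventually_atTop.1 hev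
      refine ⟨Set.Ioo w L, M1, isOpen_Ioo.mem_nhds ⟨hwy, hyL⟩, ?_⟩
      intro m hm z hz
      apply hluV
      refine ⟨(hM1 m hm).trans_le ((hpowSM m).monotone hz.1.le), ?_⟩
      have h2 : (δ^m) z < (δ^m) L := hpowSM m hz.2
      rw [hpowfix L ((hΦ L).2 hLΦ) m] at h2
      exact h2.trans hLlu.2
  choose W M hWn hWM using claim
  obtain ⟨t, ht⟩ := hC.elim_nhds_subcover' (fun y hy => W y hy) (fun y hy => hWn y hy)
  refine ⟨t.sup (fun x => M x.1 x.2), ?_⟩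
  intro m hm y hy
  obtain ⟨x, hxt, hyW⟩ := Set.mem_iUnion₂.1 (ht hy)
  exact hWM x.1 x.2 m (le_trans (Finset.le_sup (f := fun x => M x.1 x.2) hxt) hm) y hyW

lemma symmSM (δ : XI ≃ₜ XI) (h : StrictMono ⇑δ) : StrictMono ⇑δ.symm := by
  intro s t hst
  rcases lt_trichotomy (δ.symm s) (δ.symm t) with hh|hh|hh
  · exact hh
  · exact absurd (by rw [← δ.apply_symm_apply s, ← δ.apply_symm_apply t, hh]) hst.ne
  · exact absurd (by rw [← δ.apply_symm_apply s, ← δ.apply_symm_apply t]; exact h hh) (asymm hst)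

lemma mapsIoo (γ : unitInterval ≃ₜ unitInterval) (hs : StrictMono ⇑γ)
    (h0 : γ 0 = 0) (h1 : γ 1 = 1) (r : ℝ) (hr : r ∈ Set.Ioo (0:ℝ) 1) :
    ((γ ⟨r, ⟨hr.1.le, hr.2.le⟩⟩ : unitInterval) : ℝ) ∈ Set.Ioo (0:ℝ) 1 := by
  constructor
  · have hlt : (0 : unitInterval) < ⟨r, ⟨hr.1.le, hr.2.le⟩⟩ := by
      rw [← Subtype.coe_lt_coe]
      exact hr.1
    have := hs hlt
    rw [h0] at this
    exact this
  · have hlt : (⟨r, ⟨hr.1.le, hr.2.le⟩⟩ : unitInterval) < 1 := by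
      rw [← Subtype.coe_lt_coe]
      exact hr.2
    have := hs hlt
    rw [h1] at this
    exact this

/-- An orientation-preserving homeomorphism of `[0,1]` with finitely many (and at
least one) interior fixed points, viewed as a homeomorphism of `(0,1)`, is
hyperbolic-like relative to `[min Fix, max Fix]`. -/
theorem hyperbolicLike_of_finite_fix
    (γ : unitInterval ≃ₜ unitInterval)
    (hmono : Monotone (⇑γ : unitInterval → unitInterval)) :
    let F : Set ℝ := {r | r ∈ Set.Ioo (0 : ℝ) 1 ∧
      ∃ h : r ∈ unitInterval, γ ⟨r, h⟩ = ⟨r, h⟩}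
    F.Finite → F.Nonempty →
    ∃ γ' : ↥(Set.Ioo (0 : ℝ) 1) ≃ₜ ↥(Set.Ioo (0 : ℝ) 1),
      (∀ t : ↥(Set.Ioo (0 : ℝ) 1),
        ((γ' t : ℝ)) = ((γ ⟨(t : ℝ), ⟨t.2.1.le, t.2.2.le⟩⟩ : unitInterval) : ℝ)) ∧
      IsHyperbolicLike γ' {t : ↥(Set.Ioo (0 : ℝ) 1) | (t : ℝ) ∈ Set.Icc (sInf F) (sSup F)} := by

  intro F hfin hne
  have hsm0 : StrictMono ⇑γ := hmono.strictMono_of_injective γ.injective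
  have h00 : γ 0 = 0 := by
    obtain ⟨t, ht⟩ := γ.surjective 0
    have h1 : γ 0 ≤ 0 := by
      have h2 : γ 0 ≤ γ t := hmono (show (0:unitInterval) ≤ t from t.2.1)
      rwa [ht] at h2
    exact le_antisymm h1 (show (0:unitInterval) ≤ γ 0 from (γ 0).2.1)
  have h11 : γ 1 = 1 := by
    obtain ⟨t, ht⟩ := γ.surjective 1
    have h1 : (1:unitInterval) ≤ γ 1 := by
      have h2 : γ t ≤ γ 1 := hmono (show t ≤ (1:unitInterval) from t.2.2)
      rwa [ht] at h2
    exact le_antisymm (show γ 1 ≤ (1:unitInterval) from (γ 1).2.2) h1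
  have hsymmSM : StrictMono ⇑γ.symm := by
    intro s t hst
    rcases lt_trichotomy (γ.symm s) (γ.symm t) with hh|hh|hh
    · exact hh
    · exact absurd (by rw [← γ.apply_symm_apply s, ← γ.apply_symm_apply t, hh]) hst.ne
    · exact absurd (by rw [← γ.apply_symm_apply s, ← γ.apply_symm_apply t]; exact hsm0 hh)
        (asymm hst)
  have hs00 : γ.symm 0 = 0 := by
    have := congrArg γ.symm h00
    rw [γ.symm_apply_apply] at this
    exact this.symm
  have hs11 : γ.symm 1 = 1 := by
    have := congrArg γ.symm h11
    rw [γ.symm_apply_apply] at this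
    exact this.symm
  -- the restricted homeomorphism
  set toF : XI → XI :=
    fun t => ⟨_, mapsIoo γ hsm0 h00 h11 t.1 t.2⟩ with htoF
  set invF : XI → XI :=
    fun t => ⟨_, mapsIoo γ.symm hsymmSM hs00 hs11 t.1 t.2⟩ with hinvF
  have hli : ∀ t, invF (toF t) = t := by
    intro t
    apply Subtype.ext
    show ((γ.symm ⟨((γ ⟨t.1, _⟩ : unitInterval) : ℝ), _⟩ : unitInterval) : ℝ) = t.1
    have he : (⟨((γ ⟨t.1, ⟨t.2.1.le, t.2.2.le⟩⟩ : unitInterval) : ℝ), _⟩ : unitInterval)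
        = γ ⟨t.1, ⟨t.2.1.le, t.2.2.le⟩⟩ := Subtype.ext rfl
    rw [he, γ.symm_apply_apply]
  have hri : ∀ t, toF (invF t) = t := by
    intro t
    apply Subtype.ext
    show ((γ ⟨((γ.symm ⟨t.1, _⟩ : unitInterval) : ℝ), _⟩ : unitInterval) : ℝ) = t.1
    have he : (⟨((γ.symm ⟨t.1, ⟨t.2.1.le, t.2.2.le⟩⟩ : unitInterval) : ℝ), _⟩ : unitInterval)
        = γ.symm ⟨t.1, ⟨t.2.1.le, t.2.2.le⟩⟩ := Subtype.ext rfl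
    rw [he, γ.apply_symm_apply]
  have hcont1 : Continuous toF := by
    apply Continuous.subtype_mk
    exact continuous_subtype_val.comp (γ.continuous.comp
      (Continuous.subtype_mk continuous_subtype_val _))
  have hcont2 : Continuous invF := by
    apply Continuous.subtype_mk
    exact continuous_subtype_val.comp (γ.symm.continuous.comp
      (Continuous.subtype_mk continuous_subtype_val _))
  set γ' : XI ≃ₜ XI := ⟨⟨toF, invF, hli, hri⟩, hcont1, hcont2⟩ with hγ'
  refine ⟨γ', fun t => rfl, ?_⟩
  -- fixed point set
  set Φ : Set XI := {t : XI | (t : ℝ) ∈ F} with hΦdef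
  have hsmγ' : StrictMono ⇑γ' := by
    intro s t hst
    show toF s < toF t
    rw [← Subtype.coe_lt_coe]
    exact Subtype.coe_lt_coe.2 (hsm0 (by rw [← Subtype.coe_lt_coe]; exact hst))
  have hΦ : ∀ t, γ' t = t ↔ t ∈ Φ := by
    intro t
    constructor
    · intro h
      refine ⟨t.2, ⟨t.2.1.le, t.2.2.le⟩, ?_⟩
      have h2 : ((γ ⟨t.1, ⟨t.2.1.le, t.2.2.le⟩⟩ : unitInterval) : ℝ) = (t : ℝ) :=
        congrArg Subtype.val h
      exact Subtype.ext h2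
    · rintro ⟨hIoo, h, heq⟩
      apply Subtype.ext
      show ((γ ⟨t.1, _⟩ : unitInterval) : ℝ) = t.1
      have he : (⟨t.1, ⟨t.2.1.le, t.2.2.le⟩⟩ : unitInterval) = ⟨t.1, h⟩ := rfl
      rw [he, heq]
  have hΦsymm : ∀ t, γ'.symm t = t ↔ t ∈ Φ := by
    intro t
    rw [← hΦ t]
    constructor
    · intro h; conv_lhs => rw [← h]
      exact γ'.apply_symm_apply t
    · intro h; conv_lhs => rw [← h]
      exact γ'.symm_apply_apply t
  have hΦfin : Φ.Finite := hfin.preimage (Set.injOn_of_injective Subtype.val_injective)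
  -- endpoints
  have haF : sInf F ∈ F := hne.csInf_mem hfin
  have hbF : sSup F ∈ F := hne.csSup_mem hfin
  set aX : XI := ⟨sInf F, haF.1⟩ with haX
  set bX : XI := ⟨sSup F, hbF.1⟩ with hbX
  have haΦ : aX ∈ Φ := haF
  have hbΦ : bX ∈ Φ := hbF
  have hab : ∀ t ∈ Φ, aX ≤ t ∧ t ≤ bX := by
    intro t ht
    constructor
    · rw [← Subtype.coe_le_coe]
      exact csInf_le hfin.bddBelow ht
    · rw [← Subtype.coe_le_coe]
      exact le_csSup hfin.bddAbove ht
  have hK : {t : XI | (t : ℝ) ∈ Set.Icc (sInf F) (sSup F)} = Set.Icc aX bX := by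
    ext t
    simp only [Set.mem_setOf_eq, Set.mem_Icc]
    constructor
    · intro h; exact ⟨Subtype.coe_le_coe.1 h.1, Subtype.coe_le_coe.1 h.2⟩
    · intro h; exact ⟨Subtype.coe_le_coe.2 h.1, Subtype.coe_le_coe.2 h.2⟩
  -- enumeration of Φ
  refine ⟨hΦfin.toFinset.card, fun i => (hΦfin.toFinset.equivFin.symm i : XI), ?_⟩
  intro U hU
  set V : Set XI := ⋃ i, U i with hV
  have hVopen : IsOpen V := isOpen_iUnion fun i => (hU i).1
  have hΦV : Φ ⊆ V := by
    intro f hf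
    have hmem : f ∈ hΦfin.toFinset := hΦfin.mem_toFinset.2 hf
    set i := hΦfin.toFinset.equivFin ⟨f, hmem⟩ with hi
    have he : (hΦfin.toFinset.equivFin.symm i : XI) = f := by
      rw [hi, Equiv.symm_apply_apply]
    refine Set.mem_iUnion.2 ⟨i, ?_⟩
    rw [← he]
    exact (hU i).2
  obtain ⟨M1, hM1⟩ := keyX γ' hsmγ' Φ hΦ hΦfin aX bX haΦ hbΦ hab V hVopen hΦV
  obtain ⟨M2, hM2⟩ := keyX γ'.symm (symmSM γ' hsmγ') Φ hΦsymm hΦfin aX bX haΦ hbΦ hab V hVopen hΦV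
  refine ⟨max M1 M2, ?_⟩
  intro m hm
  rw [hK]
  constructor
  · rintro _ ⟨y, hy, rfl⟩
    exact hM1 m (le_of_lt (lt_of_le_of_lt (le_max_left _ _) hm)) y hy
  · rintro _ ⟨y, hy, rfl⟩
    have hpow : (γ' ^ m).symm = γ'.symm ^ m := (inv_pow γ' m).symm
    rw [hpow]
    exact hM2 m (le_of_lt (lt_of_le_of_lt (le_max_right _ _) hm)) y hy
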